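/- Define T : [0,1) → [0,1) by: T x = x + 3/4 for x ∈ [0, 1/4); T x = 1 − x for x ∈ [1/4, 1/2); T x = x − 1/2 for x ∈ [1/2, 3/4]; and T x = x for x ∈ (3/4, 1). Then: (i) T(1/4) = 3/4 and T(3/4) = 1/4, so {1/4, 3/4} is a periodic orbit of period 2; and (ii) for every x ∈ [0,1) with x ∉ {0, 1/4, 1/2, 3/4} one has T^n x ∈ (3/4, 1) for all n ≥ 3. In particular, the periodic orbit {1/4, 3/4} is isolated: for every such x, liminf_{n→∞} ρ(T^n x, T^n(1/4)) > 0, where ρ is the standard circle metric ρ(s,t) = min_{k∈ℤ} |s − t − k|. -/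
import Mathlib


/-- The non-orientation-preserving piecewise isometry of the circle `[0,1)`:
`x ↦ x + 3/4` on `[0,1/4)`, `x ↦ 1 - x` on `[1/4,1/2)`, `x ↦ x - 1/2` on `[1/2,3/4]`,
and `x ↦ x` on `(3/4,1)`. -/
noncomputable def isolatedPWI (x : ℝ) : ℝ :=
  if x < 1/4 then x + 3/4
  else if x < 1/2 then 1 - x
  else if x ≤ 3/4 then x - 1/2
  else x

lemma pwi1 {x : ℝ} (h : x < 1/4) : isolatedPWI x = x + 3/4 := if_pos h

lemma pwi2 {x : ℝ} (h1 : 1/4 ≤ x) (h2 : x < 1/2) : isolatedPWI x = 1 - x := by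
  unfold isolatedPWI; rw [if_neg (by linarith), if_pos h2]

lemma pwi3 {x : ℝ} (h1 : 1/2 ≤ x) (h2 : x ≤ 3/4) : isolatedPWI x = x - 1/2 := by
  unfold isolatedPWI; rw [if_neg (by linarith), if_neg (by linarith), if_pos h2]

lemma pwi4 {x : ℝ} (h : 3/4 < x) : isolatedPWI x = x := by
  unfold isolatedPWI
  rw [if_neg (by linarith), if_neg (by linarith), if_neg (by linarith)]

lemma pwi_iter_fix {x : ℝ} (h : 3/4 < x) : ∀ n, isolatedPWI^[n] x = x := by
  intro n
  induction n with
  | zero => rfl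
  | succ n ih => rw [Function.iterate_succ_apply', ih, pwi4 h]

lemma pwi_orbit (n : ℕ) :
    isolatedPWI^[n] (1/4 : ℝ) = if Even n then 1/4 else 3/4 := by
  induction n with
  | zero => simp
  | succ n ih =>
    rw [Function.iterate_succ_apply', ih]
    by_cases h : Even n
    · rw [if_pos h, if_neg (by simp [Nat.even_add_one, h]),
        pwi2 le_rfl (by norm_num)]
      norm_num
    · rw [if_neg h, if_pos (by simp [Nat.even_add_one, h]),
        pwi3 (by norm_num) le_rfl]
      norm_num

lemma pwi_trapped {x : ℝ} (h0 : 0 ≤ x) (h1 : x < 1)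
    (e0 : x ≠ 0) (e1 : x ≠ 1/4) (e2 : x ≠ 1/2) (e3 : x ≠ 3/4) :
    isolatedPWI^[3] x ∈ Set.Ioo (3/4 : ℝ) 1 := by
  have it3 : isolatedPWI^[3] x = isolatedPWI (isolatedPWI (isolatedPWI x)) := by
    simp [Function.iterate_succ_apply']
  rcases lt_trichotomy x (1/4) with hA | hA | hA
  · have hx0 : 0 < x := lt_of_le_of_ne h0 (Ne.symm e0)
    rw [it3, pwi1 (x := x) hA, pwi4 (x := x + 3/4) (by linarith),
      pwi4 (x := x + 3/4) (by linarith)]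
    constructor <;> linarith
  · exact absurd hA e1
  · rcases lt_trichotomy x (1/2) with hB | hB | hB
    · rw [it3, pwi2 (x := x) hA.le hB,
        pwi3 (x := 1 - x) (by linarith) (by linarith),
        pwi1 (x := 1 - x - 1/2) (by linarith)]
      constructor <;> linarith
    · exact absurd hB e2
    · rcases lt_trichotomy x (3/4) with hC | hC | hC
      · rw [it3, pwi3 (x := x) hB.le hC.le,
          pwi1 (x := x - 1/2) (by linarith),
          pwi4 (x := x - 1/2 + 3/4) (by linarith)]
        constructor <;> linarith
      · exact absurd hC e3
      · rw [it3, pwi4 (x := x) hC, pwi4 (x := x) hC, pwi4 (x := x) hC]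
        exact ⟨hC, h1⟩

/-- `{1/4, 3/4}` is a 2-periodic orbit of `isolatedPWI`, every other point of `[0,1)`
off `{0, 1/4, 1/2, 3/4}` is eventually trapped in `(3/4,1)`, and consequently the
periodic orbit is isolated: the liminf of the circle distance between the orbit of any
such point and the orbit of `1/4` is positive. -/
theorem isolated_periodic_orbit_of_flip_PWI :
    isolatedPWI (1/4) = 3/4 ∧ isolatedPWI (3/4) = 1/4 ∧
    (∀ x ∈ Set.Ico (0:ℝ) 1, x ∉ ({0, 1/4, 1/2, 3/4} : Set ℝ) →
      (∀ n : ℕ, 3 ≤ n → isolatedPWI^[n] x ∈ Set.Ioo (3/4:ℝ) 1) ∧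
      0 < Filter.liminf
        (fun n : ℕ => dist ((isolatedPWI^[n] x : ℝ) : AddCircle (1:ℝ))
          ((isolatedPWI^[n] (1/4) : ℝ) : AddCircle (1:ℝ)))
        Filter.atTop) := by
  haveI : Fact ((0:ℝ) < 1) := ⟨one_pos⟩
  refine ⟨by rw [pwi2 le_rfl (by norm_num)]; norm_num,
    by rw [pwi3 (by norm_num) le_rfl]; norm_num, ?_⟩
  intro x hx hxs
  simp only [Set.mem_insert_iff, Set.mem_singleton_iff, not_or] at hxs
  obtain ⟨e0, e1, e2, e3⟩ := hxs
  have h3 := pwi_trapped hx.1 hx.2 e0 e1 e2 e3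
  set y := isolatedPWI^[3] x with hy
  have hiter : ∀ n : ℕ, 3 ≤ n → isolatedPWI^[n] x = y := by
    intro n hn
    obtain ⟨k, rfl⟩ := Nat.exists_eq_add_of_le hn
    rw [add_comm, Function.iterate_add_apply, ← hy, pwi_iter_fix h3.1]
  have hmem : ∀ n : ℕ, 3 ≤ n → isolatedPWI^[n] x ∈ Set.Ioo (3/4:ℝ) 1 := by
    intro n hn; rw [hiter n hn]; exact h3
  refine ⟨hmem, ?_⟩
  -- the two distances
  set d1 : ℝ := dist ((y : ℝ) : AddCircle (1:ℝ)) (((1/4 : ℝ)) : AddCircle (1:ℝ)) with hd1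
  set d2 : ℝ := dist ((y : ℝ) : AddCircle (1:ℝ)) (((3/4 : ℝ)) : AddCircle (1:ℝ)) with hd2
  have hyI : y ∈ Set.Ico (0:ℝ) (0 + 1) := by
    simp only [zero_add]
    exact ⟨by linarith [h3.1], h3.2⟩
  have hne1 : ((y : ℝ) : AddCircle (1:ℝ)) ≠ (((1/4 : ℝ)) : AddCircle (1:ℝ)) := by
    rw [Ne, AddCircle.coe_eq_coe_iff_of_mem_Ico hyI (by norm_num)]
    intro h; rw [h] at h3; norm_num at h3
  have hne2 : ((y : ℝ) : AddCircle (1:ℝ)) ≠ (((3/4 : ℝ)) : AddCircle (1:ℝ)) := by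
    rw [Ne, AddCircle.coe_eq_coe_iff_of_mem_Ico hyI (by norm_num)]
    intro h; rw [h] at h3; norm_num at h3
  have hd1pos : 0 < d1 := dist_pos.mpr hne1
  have hd2pos : 0 < d2 := dist_pos.mpr hne2
  set u : ℕ → ℝ := fun n =>
    dist ((isolatedPWI^[n] x : ℝ) : AddCircle (1:ℝ))
      ((isolatedPWI^[n] (1/4) : ℝ) : AddCircle (1:ℝ)) with hu
  have huval : ∀ n : ℕ, 3 ≤ n → u n = d1 ∨ u n = d2 := by
    intro n hn
    simp only [hu, hiter n hn, pwi_orbit n]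
    by_cases h : Even n
    · left; rw [if_pos h]
    · right; rw [if_neg h]
  have hev : ∀ᶠ n in Filter.atTop, min d1 d2 ≤ u n := by
    filter_upwards [Filter.eventually_ge_atTop 3] with n hn
    rcases huval n hn with h | h <;> rw [h]
    · exact min_le_left _ _
    · exact min_le_right _ _
  have hbd : Filter.IsBoundedUnder (· ≤ ·) Filter.atTop u := by
    refine ⟨max d1 d2, Filter.eventually_map.2 ?_⟩
    filter_upwards [Filter.eventually_ge_atTop 3] with n hn
    rcases huval n hn with h | h <;> rw [h]
    · exact le_max_left _ _
    · exact le_max_right _ _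
  have := Filter.le_liminf_of_le hbd.isCoboundedUnder_ge hev
  exact lt_of_lt_of_le (lt_min hd1pos hd2pos) this
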